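/- Let Λ be a finite dimensional algebra over an algebraically closed field and M a finitely generated Λ-module with minimal projective presentation P₁ → P₀ → M → 0 given by f : P₁ → P₀. Then M is τ-rigid (i.e., Hom_Λ(M, τM) = 0) if and only if the induced map Hom_Λ(P₀, M) → Hom_Λ(P₁, M) is surjective. -/

import Mathlib

set_option linter.unusedSectionVars false
set_option linter.unusedVariables false
set_option maxHeartbeats 1000000

open Function LinearMap MulOpposite

noncomputable section

/-- A submodule `N ≤ P` is superfluous (small) if any complement generating together with it
the whole module must itself be the whole module. -/
def IsSuperfluous (R : Type) [Ring R] {P : Type} [AddCommGroup P] [Module R P]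
    (N : Submodule R P) : Prop :=
  ∀ N' : Submodule R P, N ⊔ N' = ⊤ → N' = ⊤

/-- `P₁ →f P₀ →g M → 0` is a minimal projective presentation. -/
structure IsMinimalProjPresentation {R : Type} [Ring R] {P₁ P₀ M : Type}
    [AddCommGroup P₁] [AddCommGroup P₀] [AddCommGroup M]
    [Module R P₁] [Module R P₀] [Module R M]
    (f : P₁ →ₗ[R] P₀) (g : P₀ →ₗ[R] M) : Prop where
  projective₁ : Module.Projective R P₁
  projective₀ : Module.Projective R P₀
  finite₁ : Module.Finite R P₁
  finite₀ : Module.Finite R P₀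
  surjective : Surjective g
  exact : LinearMap.range f = LinearMap.ker g
  superfluous₀ : IsSuperfluous R (LinearMap.ker g)
  superfluous₁ : IsSuperfluous R (LinearMap.ker f)

/-- A finitely generated module is Gorenstein projective if it is (isomorphic to) a syzygy of a
complete exact sequence of finitely generated projective modules which stays exact under
`Hom(-, R)`. -/
def IsGorensteinProjective (R : Type) [Ring R] (M : Type) [AddCommGroup M] [Module R M] : Prop :=
  ∃ (P : ℤ → ModuleCat.{0} R) (d : ∀ i, P i →ₗ[R] P (i + 1)),
    (∀ i, Module.Projective R (P i)) ∧ (∀ i, Module.Finite R (P i)) ∧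
    (∀ i, LinearMap.range (d i) = LinearMap.ker (d (i + 1))) ∧
    (∀ i (φ : P (i + 1) →ₗ[R] R), φ.comp (d i) = 0 →
      ∃ ψ : P (i + 1 + 1) →ₗ[R] R, φ = ψ.comp (d (i + 1))) ∧
    Nonempty (M ≃ₗ[R] LinearMap.range (d 0))

/-- A projective resolution `⋯ → P₁ → P₀ → M → 0` by finitely generated projectives. -/
structure ProjResolution (R : Type) [Ring R] (M : Type) [AddCommGroup M] [Module R M] where
  P : ℕ → ModuleCat.{0} R
  d : ∀ i, P (i + 1) →ₗ[R] P i
  aug : P 0 →ₗ[R] M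
  projective : ∀ i, Module.Projective R (P i)
  finite : ∀ i, Module.Finite R (P i)
  surjective : Surjective aug
  exact₀ : LinearMap.range (d 0) = LinearMap.ker aug
  exact : ∀ i, LinearMap.range (d (i + 1)) = LinearMap.ker (d i)

/-- Projective dimension at most `n`. -/
def ProjDimLE (R : Type) [Ring R] (M : Type) [AddCommGroup M] [Module R M] (n : ℕ) : Prop :=
  ∃ res : ProjResolution R M, ∀ i, n < i → Subsingleton (res.P i)

/-- `M` is semi-Gorenstein projective: `Ext^i(M, R) = 0` for all `i ≥ 1`, expressed as exactness
of the dual of any projective resolution in all positive degrees. -/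
def IsSemiGorensteinProjective (R : Type) [Ring R] (M : Type) [AddCommGroup M] [Module R M] :
    Prop :=
  ∀ res : ProjResolution R M, ∀ i (φ : res.P (i + 1) →ₗ[R] R),
    φ.comp (res.d (i + 1)) = 0 → ∃ ψ : res.P i →ₗ[R] R, φ = ψ.comp (res.d i)

/-- An injective coresolution `0 → N → I⁰ → I¹ → ⋯`. -/
structure InjCoresolution (R : Type) [Ring R] (N : Type) [AddCommGroup N] [Module R N] where
  I : ℕ → ModuleCat.{0} R
  aug : N →ₗ[R] I 0
  d : ∀ i, I i →ₗ[R] I (i + 1)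
  injective : ∀ i, Module.Injective R (I i)
  mono : Injective aug
  exact₀ : LinearMap.range aug = LinearMap.ker (d 0)
  exact : ∀ i, LinearMap.range (d i) = LinearMap.ker (d (i + 1))

/-- Injective dimension at most `n`. -/
def InjDimLE (R : Type) [Ring R] (N : Type) [AddCommGroup N] [Module R N] (n : ℕ) : Prop :=
  ∃ c : InjCoresolution R N, ∀ i, n < i → Subsingleton (c.I i)

/-- A Gorenstein ring: finite self-injective dimension on both sides. -/
def IsGorensteinRing (R : Type) [Ring R] : Prop :=
  ∃ n, InjDimLE R R n ∧ InjDimLE Rᵐᵒᵖ Rᵐᵒᵖ n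

/-- Indecomposability: nontrivial, and no nontrivial idempotent endomorphism. -/
def IsIndecomposable (R : Type) [Ring R] (M : Type) [AddCommGroup M] [Module R M] : Prop :=
  Nontrivial M ∧ ∀ e : M →ₗ[R] M, e.comp e = e → e = 0 ∨ e = LinearMap.id

/-- `Z` is a direct summand of `M`. -/
def IsDirectSummand (R : Type) [Ring R] (Z M : Type) [AddCommGroup Z] [AddCommGroup M]
    [Module R Z] [Module R M] : Prop :=
  ∃ (i : Z →ₗ[R] M) (p : M →ₗ[R] Z), p.comp i = LinearMap.id

/-- `X` lies in `add E`: it is a direct summand of a finite direct sum of copies of `E`. -/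
def IsInAdd (R : Type) [Ring R] (E X : Type) [AddCommGroup E] [AddCommGroup X]
    [Module R E] [Module R X] : Prop :=
  ∃ n : ℕ, IsDirectSummand R X (Fin n → E)

end
open Function LinearMap MulOpposite
noncomputable section

section Transpose
variable {R : Type} [Ring R]
variable {P₁ P₀ : Type} [AddCommGroup P₁] [AddCommGroup P₀] [Module R P₁] [Module R P₀]

/-- The map `Hom_R(P₀, R) → Hom_R(P₁, R)` given by precomposition with `f`. -/
def transposeHomMap (f : P₁ →ₗ[R] P₀) : (P₀ →ₗ[R] R) →ₗ[Rᵐᵒᵖ] (P₁ →ₗ[R] R) where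
  toFun g := g.comp f
  map_add' g h := by ext x; simp
  map_smul' a g := rfl

/-- The (Auslander–Bridger) transpose of `M` with respect to a projective presentation
`P₁ →f P₀ → M → 0`: the cokernel of `Hom(f, R)`, a right `R`-module. -/
abbrev TransposeOf (f : P₁ →ₗ[R] P₀) : Type :=
  (P₁ →ₗ[R] R) ⧸ LinearMap.range (transposeHomMap f)

end Transpose

section Dual
/-- The `K`-linear dual of a right `R`-module, regarded as a left `R`-module. -/
abbrev RightDual (K R N : Type) [Field K] [Ring R] [Algebra K R]
    [AddCommGroup N] [Module K N] [Module Rᵐᵒᵖ N] [SMulCommClass Rᵐᵒᵖ K N] : Type := N →ₗ[K] K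

variable (K R N : Type) [Field K] [Ring R] [Algebra K R]
  [AddCommGroup N] [Module K N] [Module Rᵐᵒᵖ N] [SMulCommClass Rᵐᵒᵖ K N]

variable {R N} in
/-- Right scalar multiplication by `a : R` on `N`, as a `K`-linear map. -/
def opSmulHom (a : R) : N →ₗ[K] N where
  toFun x := op a • x
  map_add' x y := smul_add _ x y
  map_smul' c x := smul_comm (op a) c x

instance : SMul R (RightDual K R N) :=
  ⟨fun a φ => (φ : N →ₗ[K] K).comp (opSmulHom (K := K) a)⟩

instance : Module R (RightDual K R N) :=
  Module.ofMinimalAxioms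
    (fun a φ ψ => by apply LinearMap.ext; intro x; rfl)
    (fun a b φ => by
      apply LinearMap.ext; intro x
      show φ (op (a + b) • x) = φ (op a • x) + φ (op b • x)
      rw [op_add, add_smul, map_add])
    (fun a b φ => by
      apply LinearMap.ext; intro x
      show φ (op (a * b) • x) = φ (op b • op a • x)
      rw [op_mul, mul_smul])
    (fun φ => by
      apply LinearMap.ext; intro x
      show φ (op (1 : R) • x) = φ x
      rw [op_one, one_smul])

end Dual

section Tau
variable (K : Type) [Field K] (R : Type) [Ring R] [Algebra K R]

/-- The Auslander–Reiten translate `τM = D Tr M` of `M` with respect to the projective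
presentation `P₁ →f P₀ → M → 0`. -/
abbrev TauOf {P₁ P₀ : Type} [AddCommGroup P₁] [AddCommGroup P₀] [Module R P₁] [Module R P₀]
    (f : P₁ →ₗ[R] P₀) : Type :=
  RightDual K R (TransposeOf f)

/-- `M` is τ-rigid: `Hom_R(M, τM) = 0` for the AR translate computed from any (equivalently, some)
minimal projective presentation of `M`. -/
def IsTauRigid (M : Type) [AddCommGroup M] [Module R M] : Prop :=
  ∀ (P₁ P₀ : ModuleCat.{0} R) (f : P₁ →ₗ[R] P₀) (g : P₀ →ₗ[R] M),
    IsMinimalProjPresentation f g → ∀ h : M →ₗ[R] TauOf K R f, h = 0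

end Tau


variable (K : Type) [Field K] [IsAlgClosed K]
variable (Λ : Type) [Ring Λ] [Algebra K Λ] [FiniteDimensional K Λ]


section AuxLemmas
open Function LinearMap MulOpposite

/-- dual basis for a f.g. projective module -/
lemma exists_dual_basis (R P : Type) [Ring R] [AddCommGroup P] [Module R P]
    (hproj : Module.Projective R P) (hfin : Module.Finite R P) :
    ∃ (n : ℕ) (x : Fin n → P) (a : Fin n → (P →ₗ[R] R)),
      ∀ p : P, ∑ i, a i p • x i = p := by
  obtain ⟨n, s, hs⟩ := Module.Finite.exists_fin' R P
  obtain ⟨j, hj⟩ := Module.projective_lifting_property s LinearMap.id hs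
  refine ⟨n, fun i => s (Pi.single i 1), fun i => (LinearMap.proj i).comp j, fun p => ?_⟩
  have h1 : ∀ i : Fin n, (j p i) • s (Pi.single i (1:R)) = s (Pi.single i (j p i)) := by
    intro i
    rw [← map_smul]
    congr 1
    rw [← Pi.single_smul, smul_eq_mul, mul_one]
  calc ∑ i, ((LinearMap.proj i).comp j) p • s (Pi.single i 1)
      = ∑ i, s (Pi.single i (j p i)) := by
        refine Finset.sum_congr rfl fun i _ => h1 i
    _ = s (∑ i, Pi.single i (j p i)) := by rw [map_sum]
    _ = s (j p) := by rw [Finset.univ_sum_single]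
    _ = p := by have := LinearMap.congr_fun hj p; simpa using this

end AuxLemmas

theorem stmt0 (M P₁ P₀ : Type) [AddCommGroup M] [Module Λ M] [Module.Finite Λ M]
    [AddCommGroup P₁] [Module Λ P₁] [AddCommGroup P₀] [Module Λ P₀]
    (f : P₁ →ₗ[Λ] P₀) (g : P₀ →ₗ[Λ] M) (hpres : IsMinimalProjPresentation f g) :
    (∀ φ : M →ₗ[Λ] TauOf K Λ f, φ = 0) ↔
      Function.Surjective (fun ψ : P₀ →ₗ[Λ] M => ψ.comp f) := by
  obtain ⟨n1, x, a, hP1⟩ := exists_dual_basis Λ P₁ hpres.projective₁ hpres.finite₁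
  obtain ⟨n0, y, b, hP0⟩ := exists_dual_basis Λ P₀ hpres.projective₀ hpres.finite₀
  set N : Submodule Λᵐᵒᵖ (P₁ →ₗ[Λ] Λ) := LinearMap.range (transposeHomMap f) with hN
  constructor
  · intro hrig ψ
    by_contra hcon
    push_neg at hcon
    letI : Module K M := Module.compHom M (algebraMap K Λ)
    haveI : SMulCommClass Λ K M := ⟨fun a c m => by
      show a • ((algebraMap K Λ c) • m) = (algebraMap K Λ c) • a • m
      rw [← mul_smul, ← mul_smul, Algebra.commutes]⟩
    have halg : ∀ (c : K) (m : M), c • m = algebraMap K Λ c • m := fun _ _ => rfl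
    -- the composition map as a K-linear map
    let compMap : (P₀ →ₗ[Λ] M) →ₗ[K] (P₁ →ₗ[Λ] M) :=
      { toFun := fun ψ0 => ψ0.comp f
        map_add' := fun ψ0 ψ1 => LinearMap.ext fun x' => rfl
        map_smul' := fun c ψ0 => LinearMap.ext fun x' => rfl }
    set NR : Submodule K (P₁ →ₗ[Λ] M) := LinearMap.range compMap with hNR
    have hψmem : ψ ∉ NR := by
      rintro ⟨ψ0, hψ0⟩
      exact hcon ψ0 hψ0
    have hψne : NR.mkQ ψ ≠ 0 := by
      intro h
      rw [Submodule.mkQ_apply, Submodule.Quotient.mk_eq_zero] at h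
      exact hψmem h
    obtain ⟨ξ, hξ⟩ : ∃ ξ : ((P₁ →ₗ[Λ] M) ⧸ NR) →ₗ[K] K, ξ (NR.mkQ ψ) ≠ 0 := by
      by_contra h
      push_neg at h
      exact hψne ((Module.forall_dual_apply_eq_zero_iff K (NR.mkQ ψ)).1 h)
    -- for each m : M, the K-linear map  α ↦ α.smulRight m
    let sm : M → ((P₁ →ₗ[Λ] Λ) →ₗ[K] (P₁ →ₗ[Λ] M)) := fun m =>
      { toFun := fun α => α.smulRight m
        map_add' := fun α β => LinearMap.ext fun x' => by
          simp [add_smul]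
        map_smul' := fun c α => LinearMap.ext fun x' => by
          simp only [LinearMap.smulRight_apply, LinearMap.smul_apply, RingHom.id_apply]
          rw [Algebra.smul_def, mul_smul, halg] }
    have hker : ∀ m : M, N.restrictScalars K ≤ LinearMap.ker (ξ ∘ₗ NR.mkQ ∘ₗ sm m) := by
      intro m α hα
      obtain ⟨β, hβ⟩ := hα
      have hmem : (sm m) α ∈ NR := by
        refine ⟨β.smulRight m, ?_⟩
        rw [← hβ]
        exact LinearMap.ext fun x' => rfl
      simp only [LinearMap.mem_ker, LinearMap.comp_apply, Submodule.mkQ_apply]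
      rw [(Submodule.Quotient.mk_eq_zero NR).2 hmem, map_zero]
    let Phi : M → TauOf K Λ f := fun m =>
      (Submodule.liftQ (N.restrictScalars K) (ξ ∘ₗ NR.mkQ ∘ₗ sm m) (hker m)) ∘ₗ
        ((Submodule.Quotient.restrictScalarsEquiv K N).symm : TransposeOf f →ₗ[K] _)
    have heval : ∀ (m : M) (α : P₁ →ₗ[Λ] Λ),
        Phi m (Submodule.Quotient.mk α) = ξ (NR.mkQ (α.smulRight m)) := by
      intro m α
      show (Submodule.liftQ (N.restrictScalars K) (ξ ∘ₗ NR.mkQ ∘ₗ sm m) (hker m))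
          ((Submodule.Quotient.restrictScalarsEquiv K N).symm (Submodule.Quotient.mk α))
        = ξ (NR.mkQ (α.smulRight m))
      rw [Submodule.Quotient.restrictScalarsEquiv_symm_mk, Submodule.liftQ_apply]
      rfl
    let φ : M →ₗ[Λ] TauOf K Λ f :=
      { toFun := Phi
        map_add' := fun m m' => LinearMap.ext fun t => by
          obtain ⟨α, rfl⟩ := Submodule.Quotient.mk_surjective N t
          show Phi (m + m') (Submodule.Quotient.mk α)
            = Phi m (Submodule.Quotient.mk α) + Phi m' (Submodule.Quotient.mk α)
          have hadd : α.smulRight (m + m') = α.smulRight m + α.smulRight m' :=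
            LinearMap.ext fun x' => by simp [smul_add]
          rw [heval, heval, heval, ← map_add, ← map_add, hadd]
        map_smul' := fun c m => LinearMap.ext fun t => by
          obtain ⟨α, rfl⟩ := Submodule.Quotient.mk_surjective N t
          show Phi (c • m) (Submodule.Quotient.mk α)
            = Phi m (op c • (Submodule.Quotient.mk α : TransposeOf f))
          have hsmul : α.smulRight (c • m) = (op c • α).smulRight m := by
            refine LinearMap.ext fun x' => ?_
            show (α x') • (c • m) = (op c • α) x' • m
            rw [LinearMap.smul_apply, op_smul_eq_mul, mul_smul]
          rw [← Submodule.Quotient.mk_smul, heval, heval, hsmul]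
        }
    have hφ0 : φ = 0 := hrig φ
    have hPhi0 : ∀ (m : M) (t : TransposeOf f), Phi m t = 0 := by
      intro m t
      have := LinearMap.congr_fun (LinearMap.congr_fun hφ0 m) t
      exact (by simpa using this : φ m t = 0)
    have hψdecomp : ψ = ∑ i, (a i).smulRight (ψ (x i)) := by
      refine LinearMap.ext fun x' => ?_
      conv_lhs => rw [← hP1 x']
      rw [map_sum]
      simp
    refine hξ ?_
    calc ξ (NR.mkQ ψ) = ξ (NR.mkQ (∑ i, (a i).smulRight (ψ (x i)))) := by rw [← hψdecomp]
      _ = ∑ i, ξ (NR.mkQ ((a i).smulRight (ψ (x i)))) := by rw [map_sum, map_sum]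
      _ = ∑ i, Phi (ψ (x i)) (Submodule.Quotient.mk (a i)) := by
          refine Finset.sum_congr rfl fun i _ => ?_
          rw [heval]
      _ = 0 := by simp [hPhi0]
  · intro hsurj φ
    have hsm : ∀ (c : Λ) (m : M) (t : TransposeOf f), φ (c • m) t = φ m (op c • t) := by
      intro c m t
      rw [map_smul]
      rfl
    refine LinearMap.ext fun m => LinearMap.ext fun t => ?_
    show φ m t = 0
    obtain ⟨α, rfl⟩ := Submodule.Quotient.mk_surjective N t
    obtain ⟨ψ₀, hψ₀⟩ := hsurj (α.smulRight m)
    have key0 : ∀ x' : P₁, α x' • m = ψ₀ (f x') := by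
      intro x'
      have := LinearMap.congr_fun hψ₀ x'
      simpa using this.symm
    have mk_sum : ∀ {ι : Type} (s : Finset ι) (h : ι → (P₁ →ₗ[Λ] Λ)),
        (Submodule.Quotient.mk (∑ i ∈ s, h i) : TransposeOf f)
          = ∑ i ∈ s, (Submodule.Quotient.mk (h i) : TransposeOf f) :=
      fun s h => map_sum N.mkQ h s
    have stepA : (∑ i, op (α (x i)) • a i) = α := by
      ext x'
      simp only [LinearMap.sum_apply, FunLike.coe_sum, Finset.sum_apply, LinearMap.smul_apply, op_smul_eq_mul]
      conv_rhs => rw [← hP1 x']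
      rw [map_sum]
      simp [smul_eq_mul]
    have stepC : ∀ jj : Fin n0, (∑ i, op (b jj (f (x i))) • a i) = (b jj).comp f := by
      intro jj
      ext x'
      simp only [FunLike.coe_sum, Finset.sum_apply, LinearMap.smul_apply, op_smul_eq_mul,
        LinearMap.comp_apply]
      conv_rhs => rw [← hP1 x']
      rw [map_sum, map_sum]
      simp [smul_eq_mul]
    have hzero : ∀ jj : Fin n0, (Submodule.Quotient.mk ((b jj).comp f) : TransposeOf f) = 0 := by
      intro jj
      rw [Submodule.Quotient.mk_eq_zero]
      exact ⟨b jj, rfl⟩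
    calc φ m (Submodule.Quotient.mk α)
        = φ m (Submodule.Quotient.mk (∑ i, op (α (x i)) • a i)) := by rw [stepA]
      _ = ∑ i, φ m (op (α (x i)) • (Submodule.Quotient.mk (a i) : TransposeOf f)) := by
          rw [mk_sum, map_sum]
          refine Finset.sum_congr rfl fun i _ => ?_
          rw [Submodule.Quotient.mk_smul]
      _ = ∑ i, φ (α (x i) • m) (Submodule.Quotient.mk (a i)) := by
          refine Finset.sum_congr rfl fun i _ => ?_
          rw [hsm]
      _ = ∑ i, φ (ψ₀ (f (x i))) (Submodule.Quotient.mk (a i)) := by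
          refine Finset.sum_congr rfl fun i _ => ?_
          rw [key0]
      _ = ∑ i, ∑ jj, φ (ψ₀ (y jj)) (op (b jj (f (x i))) • (Submodule.Quotient.mk (a i) : TransposeOf f)) := by
          refine Finset.sum_congr rfl fun i _ => ?_
          conv_lhs => rw [← hP0 (f (x i))]
          rw [map_sum, map_sum, LinearMap.sum_apply]
          refine Finset.sum_congr rfl fun jj _ => ?_
          rw [map_smul, ← hsm]
      _ = ∑ jj, ∑ i, φ (ψ₀ (y jj)) (op (b jj (f (x i))) • (Submodule.Quotient.mk (a i) : TransposeOf f)) := by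
          exact Finset.sum_comm
      _ = ∑ jj, φ (ψ₀ (y jj)) (Submodule.Quotient.mk (∑ i, op (b jj (f (x i))) • a i)) := by
          refine Finset.sum_congr rfl fun jj _ => ?_
          rw [mk_sum, map_sum]
          refine Finset.sum_congr rfl fun i _ => ?_
          rw [Submodule.Quotient.mk_smul]
      _ = ∑ jj, φ (ψ₀ (y jj)) (Submodule.Quotient.mk ((b jj).comp f)) := by
          refine Finset.sum_congr rfl fun jj _ => ?_
          rw [stepC]
      _ = 0 := by
          simp only [hzero, map_zero, Finset.sum_const_zero]
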